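/- Let f be a transcendental entire function and suppose the escaping set I(f) contains a spider's web E (a connected set E such that there exist simply connected domains Gₙ with ∂Gₙ ⊂ E, Gₙ ⊂ G_{n+1}, and ∪ₙ Gₙ = ℂ). Then I(f) itself is a spider's web; in particular I(f) is connected. -/

import Mathlib

open Metric Filter

/-- The escaping set. -/
def escapingSet (f : ℂ → ℂ) : Set ℂ :=
  {z | Tendsto (fun n => ‖f^[n] z‖) atTop atTop}

/-- A spider's web: a connected set `E` together with an increasing exhaustion of the plane
by bounded simply connected domains whose boundaries lie in `E`. -/
def SpidersWeb (E : Set ℂ) : Prop :=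
  IsConnected E ∧ ∃ G : ℕ → Set ℂ,
    (∀ n, IsOpen (G n) ∧ IsConnected (G n) ∧ Bornology.IsBounded (G n) ∧
      SimplyConnectedSpace (G n) ∧ frontier (G n) ⊆ E ∧ G n ⊆ G (n + 1)) ∧
    (⋃ n, G n) = Set.univ

lemma escaping_iterate_iff (f : ℂ → ℂ) (k : ℕ) (x : ℂ) :
    f^[k] x ∈ escapingSet f ↔ x ∈ escapingSet f := by
  unfold escapingSet
  simp only [Set.mem_setOf_eq]
  have h : (fun n => ‖f^[n] (f^[k] x)‖) = fun n => ‖f^[n + k] x‖ := by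
    funext n
    rw [Function.iterate_add_apply]
  rw [h]
  exact tendsto_add_atTop_iff_nat (f := fun n => ‖f^[n] x‖) k

lemma frontier_ccIn_subset {O : Set ℂ} (hO : IsOpen O) (x : ℂ) :
    frontier (connectedComponentIn O x) ⊆ frontier O := by
  intro y hy
  set C := connectedComponentIn O x with hC
  have hCopen : IsOpen C := hO.connectedComponentIn
  rw [hCopen.frontier_eq] at hy
  obtain ⟨hyc, hyn⟩ := hy
  constructor
  · exact closure_mono (connectedComponentIn_subset O x) hyc
  · rw [hO.interior_eq]
    intro hyO
    have hC' : IsOpen (connectedComponentIn O y) := hO.connectedComponentIn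
    have hyC' : y ∈ connectedComponentIn O y := mem_connectedComponentIn hyO
    obtain ⟨w, hwC', hwC⟩ := mem_closure_iff.mp hyc _ hC' hyC'
    have h1 : connectedComponentIn O y = connectedComponentIn O w := connectedComponentIn_eq hwC'
    have h2 : connectedComponentIn O x = connectedComponentIn O w := connectedComponentIn_eq hwC
    exact hyn (by rw [hC, h2, ← h1]; exact hyC')

lemma preconn_subset_of_frontier_disjoint {S T : Set ℂ} (hS : IsPreconnected S) (hT : IsOpen T)
    (hfr : S ∩ frontier T = ∅) (hne : (S ∩ T).Nonempty) : S ⊆ T := by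
  have hcov : S ⊆ T ∪ (closure T)ᶜ := by
    intro s hs
    by_cases h1 : s ∈ T
    · exact Or.inl h1
    · refine Or.inr fun hc => ?_
      exact (Set.eq_empty_iff_forall_notMem.mp hfr s) ⟨hs, hc, by rwa [hT.interior_eq]⟩
  by_cases h2 : (S ∩ (closure T)ᶜ).Nonempty
  · obtain ⟨p, hp1, hp2⟩ := hS T (closure T)ᶜ hT isClosed_closure.isOpen_compl hcov hne h2
    exact absurd (subset_closure hp2.1) hp2.2
  · intro s hs
    rcases hcov hs with h | h
    · exact h
    · exact absurd ⟨s, hs, h⟩ h2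

lemma entire_isOpenMap {f : ℂ → ℂ} (hf : Differentiable ℂ f)
    (hnc : ∀ c : ℂ, f ≠ fun _ => c) : IsOpenMap f := by
  have ha : AnalyticOnNhd ℂ f Set.univ := Complex.analyticOnNhd_univ_iff_differentiable.mpr hf
  rcases ha.is_constant_or_isOpen isPreconnected_univ with ⟨w, hw⟩ | h
  · exact absurd (funext fun z => hw z (Set.mem_univ z)) (hnc w)
  · exact fun s hs => h s (Set.subset_univ s) hs

theorem escaping_set_spiders_web
    (f : ℂ → ℂ) (hf : Differentiable ℂ f)
    (htrans : ∀ p : Polynomial ℂ, f ≠ fun z => p.eval z)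
    (E : Set ℂ) (hE : E ⊆ escapingSet f) (hEweb : SpidersWeb E) :
    SpidersWeb (escapingSet f) ∧ IsConnected (escapingSet f) := by
  obtain ⟨⟨hEne, hEconn⟩, G, hG, hGu⟩ := hEweb
  set I := escapingSet f with hI
  -- basic facts about f
  have hnc : ∀ c : ℂ, f ≠ fun _ => c := by
    intro c hc
    refine htrans (Polynomial.C c) ?_
    funext z
    rw [hc]
    simp
  have hopen : IsOpenMap f := entire_isOpenMap hf hnc
  have hopenk : ∀ k : ℕ, IsOpenMap (f^[k]) := by
    intro k
    induction k with
    | zero => simpa using IsOpenMap.id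
    | succ n ih => rw [Function.iterate_succ]; exact ih.comp hopen
  have hcont : Continuous f := hf.continuous
  have hcontk : ∀ k : ℕ, Continuous (f^[k]) := fun k => hcont.iterate k
  -- facts about G
  have hGopen : ∀ n, IsOpen (G n) := fun n => (hG n).1
  have hGbdd : ∀ n, Bornology.IsBounded (G n) := fun n => (hG n).2.2.1
  have hGfr : ∀ n, frontier (G n) ⊆ E := fun n => (hG n).2.2.2.2.1
  have hGmono : Monotone G := monotone_nat_of_le_succ fun n => (hG n).2.2.2.2.2
  have hGmem : ∀ x : ℂ, ∃ m, x ∈ G m := by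
    intro x
    have : x ∈ ⋃ n, G n := by rw [hGu]; trivial
    exact Set.mem_iUnion.mp this
  have hGex : ∀ K : Set ℂ, IsCompact K → ∃ m, K ⊆ G m := by
    intro K hK
    obtain ⟨t, ht⟩ := hK.elim_finite_subcover G hGopen
      (by rw [Set.iUnion_eq_univ_iff.mpr fun x => hGmem x]; exact Set.subset_univ K)
    refine ⟨t.sup id, fun x hx => ?_⟩
    obtain ⟨n, hn, hxn⟩ := Set.mem_iUnion₂.mp (ht hx)
    exact hGmono (Finset.le_sup (f := id) hn) hxn
  -- E is unbounded
  have hEunb : ∀ R : ℝ, ∃ x ∈ E, R < ‖x‖ := by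
    intro R
    set c : ℂ := ((max R 0 + 1 : ℝ) : ℂ) with hc
    obtain ⟨m, hm⟩ := hGmem c
    have hcomp : IsCompact (closure (G m)) := (hGbdd m).isCompact_closure
    obtain ⟨x₀, hx₀mem, hx₀max⟩ := hcomp.exists_isMaxOn ⟨c, subset_closure hm⟩
      (continuous_norm.continuousOn)
    have hxc : ‖c‖ ≤ ‖x₀‖ := hx₀max (subset_closure hm)
    have habsc : ‖c‖ = max R 0 + 1 := by
      rw [hc, Complex.norm_real, Real.norm_eq_abs]
      exact abs_of_pos (by positivity)
    have hx₀pos : 0 < ‖x₀‖ := by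
      rw [habsc] at hxc
      nlinarith [le_max_right R 0]
    have hx₀fr : x₀ ∈ frontier (G m) := by
      rw [frontier, (hGopen m).interior_eq]
      refine ⟨hx₀mem, fun hx₀G => ?_⟩
      obtain ⟨δ, hδpos, hδ⟩ := Metric.isOpen_iff.mp (hGopen m) x₀ hx₀G
      set t : ℝ := 1 + δ / 2 / ‖x₀‖ with ht
      have htpos : (0:ℝ) < δ / 2 / ‖x₀‖ := by positivity
      set y : ℂ := x₀ * ((t : ℝ) : ℂ) with hy
      have hyG : y ∈ G m := by
        apply hδ
        rw [Metric.mem_ball, Complex.dist_eq]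
        have heq : y - x₀ = x₀ * (((δ / 2 / ‖x₀‖ : ℝ)) : ℂ) := by
          rw [hy, ht]
          push_cast
          ring
        rw [heq, norm_mul, Complex.norm_real, Real.norm_eq_abs, abs_of_pos htpos, mul_div_cancel₀]
        · linarith
        · exact ne_of_gt hx₀pos
      have hys : ‖y‖ = ‖x₀‖ * t := by
        rw [hy, norm_mul, Complex.norm_real, Real.norm_eq_abs]
        rw [abs_of_pos (by rw [ht]; linarith)]
      have hlt : ‖x₀‖ < ‖y‖ := by
        rw [hys, ht]
        nlinarith
      exact absurd (hx₀max (subset_closure hyG)) (not_le.mpr hlt)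
    refine ⟨x₀, hGfr m hx₀fr, ?_⟩
    rw [habsc] at hxc
    calc R ≤ max R 0 := le_max_left R 0
    _ < max R 0 + 1 := by linarith
    _ ≤ ‖x₀‖ := hxc
  -- the key claim: no separation
  have key : ∀ u v : Set ℂ, IsOpen u → IsOpen v → I ⊆ u ∪ v → I ∩ (u ∩ v) = ∅ →
      E ⊆ u → ∀ z, z ∈ I ∩ v → False := by
    intro u v hu hv hcov hdisj hEu z hzIv
    obtain ⟨hzI, hzv⟩ := hzIv
    set A : Set ℂ := I ∩ u with hA
    set B : Set ℂ := I ∩ v with hB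
    have hIAB : I = A ∪ B := by
      rw [hA, hB, ← Set.inter_union_distrib_left]
      exact (Set.inter_eq_self_of_subset_left hcov).symm
    have hsep1 : closure A ∩ B = ∅ := by
      ext x
      simp only [Set.mem_inter_iff, Set.mem_empty_iff_false, iff_false, not_and]
      intro hxc hxB
      obtain ⟨y, hyv, hyA⟩ := mem_closure_iff.mp hxc v hv hxB.2
      exact Set.eq_empty_iff_forall_notMem.mp hdisj y ⟨hyA.1, hyA.2, hyv⟩
    have hsep2 : A ∩ closure B = ∅ := by
      ext x
      simp only [Set.mem_inter_iff, Set.mem_empty_iff_false, iff_false, not_and]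
      intro hxA hxc
      obtain ⟨y, hyu, hyB⟩ := mem_closure_iff.mp hxc u hu hxA.2
      exact Set.eq_empty_iff_forall_notMem.mp hdisj y ⟨hyB.1, hyu, hyB.2⟩
    have hEA : E ⊆ A := fun x hx => ⟨hE hx, hEu hx⟩
    have hzB : z ∈ B := ⟨hzI, hzv⟩
    -- the component Ω of z in (closure A)ᶜ
    have hzO : z ∈ (closure A)ᶜ := fun hc =>
      Set.eq_empty_iff_forall_notMem.mp hsep1 z ⟨hc, hzB⟩
    have hOopen : IsOpen (closure A)ᶜ := isClosed_closure.isOpen_compl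
    set Ω : Set ℂ := connectedComponentIn (closure A)ᶜ z with hΩ
    have hΩopen : IsOpen Ω := hOopen.connectedComponentIn
    have hΩconn : IsPreconnected Ω := isPreconnected_connectedComponentIn
    have hΩz : z ∈ Ω := mem_connectedComponentIn hzO
    have hΩsub : Ω ⊆ (closure A)ᶜ := connectedComponentIn_subset _ _
    have hΩfr : ∀ m, Ω ∩ frontier (G m) = ∅ := by
      intro m
      ext x
      simp only [Set.mem_inter_iff, Set.mem_empty_iff_false, iff_false, not_and]
      intro hxΩ hxfr
      exact hΩsub hxΩ (subset_closure (hEA (hGfr m hxfr)))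
    obtain ⟨m₀, hm₀⟩ := hGmem z
    have hΩbdd : Bornology.IsBounded Ω :=
      (hGbdd m₀).subset (preconn_subset_of_frontier_disjoint hΩconn (hGopen m₀) (hΩfr m₀)
        ⟨z, hΩz, hm₀⟩)
    -- Q = I ∩ Ω, a bounded piece of I separated from the rest of I
    set Q : Set ℂ := I ∩ Ω with hQ
    have hzQ : z ∈ Q := ⟨hzI, hΩz⟩
    have hQB : Q ⊆ B := by
      intro x hx
      rcases hIAB ▸ hx.1 with h | h
      · exact absurd (subset_closure h) (hΩsub hx.2)
      · exact h
    have hQbdd : Bornology.IsBounded Q := hΩbdd.subset fun x hx => hx.2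
    have hQne : Q.Nonempty := ⟨z, hzQ⟩
    have hIQA : A ⊆ I \ Q := by
      intro x hx
      refine ⟨hx.1, fun hxQ => absurd (subset_closure hx) (hΩsub hxQ.2)⟩
    have hIQne : (I \ Q).Nonempty := hEne.mono (hEA.trans hIQA)
    have hIQsplit : I \ Q ⊆ A ∪ (B \ Ω) := by
      intro x hx
      rcases hIAB ▸ hx.1 with h | h
      · exact Or.inl h
      · exact Or.inr ⟨h, fun hxΩ => hx.2 ⟨hx.1, hxΩ⟩⟩
    -- Q and I \ Q are separated
    have hsQ1 : closure Q ∩ (I \ Q) = ∅ := by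
      ext x
      simp only [Set.mem_inter_iff, Set.mem_empty_iff_false, iff_false, not_and]
      intro hxc hxIQ
      rcases hIQsplit hxIQ with h | h
      · -- x ∈ A, but closure Q ⊆ closure B
        have : x ∈ closure B := closure_mono hQB hxc
        exact Set.eq_empty_iff_forall_notMem.mp hsep2 x ⟨h, this⟩
      · -- x ∈ B \ Ω, but closure Q ⊆ closure Ω = Ω ∪ frontier Ω
        have hxclΩ : x ∈ closure Ω := closure_mono (fun y hy => hy.2) hxc
        by_cases hxΩ : x ∈ Ω
        · exact h.2 hxΩ
        · have hxfr : x ∈ frontier Ω := ⟨hxclΩ, by rwa [hΩopen.interior_eq]⟩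
          have : x ∈ frontier (closure A)ᶜ := frontier_ccIn_subset hOopen z hxfr
          rw [frontier_compl] at this
          have hxclA : x ∈ closure A := frontier_subset_closure (frontier_closure_subset this)
          exact Set.eq_empty_iff_forall_notMem.mp hsep1 x ⟨hxclA, h.1⟩
    have hsQ2 : Q ∩ closure (I \ Q) = ∅ := by
      ext x
      simp only [Set.mem_inter_iff, Set.mem_empty_iff_false, iff_false, not_and]
      intro hxQ hxc
      have hxc' : x ∈ closure (A ∪ (B \ Ω)) := closure_mono hIQsplit hxc
      rw [closure_union] at hxc'
      rcases hxc' with h | h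
      · exact Set.eq_empty_iff_forall_notMem.mp hsep1 x ⟨h, hQB hxQ⟩
      · obtain ⟨y, hyΩ, hyB, hynΩ⟩ := mem_closure_iff.mp h Ω hΩopen hxQ.2
        exact hynΩ hyΩ
    -- the bounded open neighborhood W₀ of Q with closure W₀ ∩ I = Q
    set W₀ : Set ℂ := {x | infDist x Q < min 1 (infDist x (I \ Q))} with hW₀
    have hW₀open : IsOpen W₀ :=
      isOpen_lt (continuous_infDist_pt Q) (continuous_const.min (continuous_infDist_pt (I \ Q)))
    have hQW₀ : Q ⊆ W₀ := by
      intro x hx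
      have h1 : infDist x Q = 0 := infDist_zero_of_mem hx
      have h2 : 0 < infDist x (I \ Q) := by
        rcases lt_or_eq_of_le (infDist_nonneg (s := I \ Q) (x := x)) with h | h
        · exact h
        · exfalso
          have : x ∈ closure (I \ Q) := (mem_closure_iff_infDist_zero hIQne).mpr h.symm
          exact Set.eq_empty_iff_forall_notMem.mp hsQ2 x ⟨hx, this⟩
      rw [Set.mem_setOf_eq, h1]
      exact lt_min one_pos h2
    have hW₀bdd : Bornology.IsBounded W₀ := by
      obtain ⟨R, hR⟩ := (isBounded_iff_subset_closedBall 0).mp hQbdd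
      rw [isBounded_iff_subset_closedBall 0]
      refine ⟨R + 1, fun x hx => ?_⟩
      have h1 : infDist x Q < 1 := lt_of_lt_of_le hx (min_le_left _ _)
      obtain ⟨y, hyQ, hyd⟩ := (infDist_lt_iff hQne).mp h1
      have := hR hyQ
      rw [mem_closedBall] at this ⊢
      calc dist x 0 ≤ dist x y + dist y 0 := dist_triangle x y 0
      _ ≤ R + 1 := by linarith
    have hclW₀I : ∀ x ∈ I, x ∈ closure W₀ → x ∈ Q := by
      intro x hxI hxc
      by_contra hxQ
      have hxIQ : x ∈ I \ Q := ⟨hxI, hxQ⟩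
      have hd : 0 < infDist x Q := by
        rcases lt_or_eq_of_le (infDist_nonneg (s := Q) (x := x)) with h | h
        · exact h
        · exfalso
          have : x ∈ closure Q := (mem_closure_iff_infDist_zero hQne).mpr h.symm
          exact Set.eq_empty_iff_forall_notMem.mp hsQ1 x ⟨this, hxIQ⟩
      obtain ⟨y, hyball, hyW₀⟩ := mem_closure_iff.mp hxc (Metric.ball x (infDist x Q / 3))
        Metric.isOpen_ball (Metric.mem_ball_self (by linarith))
      rw [Metric.mem_ball] at hyball
      have h1 : infDist x Q ≤ infDist y Q + dist x y := infDist_le_infDist_add_dist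
      have h2 : infDist y (I \ Q) ≤ dist y x := infDist_le_dist_of_mem hxIQ
      have h3 : infDist y Q < infDist y (I \ Q) := lt_of_lt_of_le hyW₀ (min_le_right _ _)
      have h4 : dist x y = dist y x := dist_comm x y
      linarith
    have hfrW₀I : ∀ x ∈ frontier W₀, x ∉ I := by
      intro x hxfr hxI
      have : x ∈ Q := hclW₀I x hxI (frontier_subset_closure hxfr)
      rw [hW₀open.frontier_eq] at hxfr
      exact hxfr.2 (hQW₀ this)
    -- the dynamical part
    have hzW₀ : z ∈ W₀ := hQW₀ hzQ
    set V : ℕ → Set ℂ := fun k => connectedComponentIn (f^[k] '' W₀) (f^[k] z) with hV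
    have hWkopen : ∀ k, IsOpen (f^[k] '' W₀) := fun k => hopenk k W₀ hW₀open
    have hclW₀comp : IsCompact (closure W₀) := hW₀bdd.isCompact_closure
    have hWkcl : ∀ k, closure (f^[k] '' W₀) ⊆ f^[k] '' closure W₀ := by
      intro k
      exact closure_minimal (Set.image_mono  subset_closure)
        (hclW₀comp.image (hcontk k)).isClosed
    have hfrWkI : ∀ k, ∀ y ∈ frontier (f^[k] '' W₀), y ∉ I := by
      intro k y hyfr hyI
      rw [(hWkopen k).frontier_eq] at hyfr
      obtain ⟨hycl, hyn⟩ := hyfr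
      obtain ⟨x, hxcl, hxy⟩ := hWkcl k hycl
      have hxW₀ : x ∉ W₀ := fun hxW₀ => hyn ⟨x, hxW₀, hxy⟩
      have hxI : x ∈ I := by
        rw [hI, ← escaping_iterate_iff f k x, hxy]
        exact hyI
      exact hxW₀ (hQW₀ (hclW₀I x hxI hxcl))
    have hVkopen : ∀ k, IsOpen (V k) := fun k => (hWkopen k).connectedComponentIn
    have hVkconn : ∀ k, IsPreconnected (V k) := fun k => isPreconnected_connectedComponentIn
    have hzVk : ∀ k, f^[k] z ∈ V k := fun k =>
      mem_connectedComponentIn ⟨z, hzW₀, rfl⟩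
    have hW0eq : f^[0] '' W₀ = W₀ := by simp
    have hV₀sub : V 0 ⊆ W₀ := (connectedComponentIn_subset _ _).trans hW0eq.subset
    have hzV₀ : z ∈ V 0 := by simpa using hzVk 0
    have hVkbdd : ∀ k, Bornology.IsBounded (V k) := by
      intro k
      have h1 : V k ⊆ f^[k] '' closure W₀ :=
        (connectedComponentIn_subset _ _).trans (Set.image_mono  subset_closure)
      exact ((hclW₀comp.image (hcontk k)).isBounded).subset h1
    have hfrVkI : ∀ k, ∀ y ∈ frontier (V k), y ∉ I := by
      intro k y hyfr
      exact hfrWkI k y (frontier_ccIn_subset (hWkopen k) _ hyfr)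
    have hVkE : ∀ k, E ∩ V k = ∅ := by
      intro k
      by_contra hne
      have hne' : (E ∩ V k).Nonempty := Set.nonempty_iff_ne_empty.mpr hne
      have hsub : E ⊆ V k := by
        refine preconn_subset_of_frontier_disjoint hEconn (hVkopen k) ?_ hne'
        ext x
        simp only [Set.mem_inter_iff, Set.mem_empty_iff_false, iff_false, not_and]
        intro hxE hxfr
        exact hfrVkI k x hxfr (hE hxE)
      obtain ⟨R, hR⟩ := (isBounded_iff_subset_closedBall 0).mp (hVkbdd k)
      obtain ⟨x, hxE, hxR⟩ := hEunb R
      have := hR (hsub hxE)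
      rw [mem_closedBall, Complex.dist_eq, sub_zero] at this
      exact absurd this (not_le.mpr hxR)
    -- every point of the closure of V 0 escapes
    have hV₀I : ∀ x ∈ closure (V 0), x ∈ I := by
      intro x hxV₀
      rw [hI]
      unfold escapingSet
      rw [Set.mem_setOf_eq, tendsto_atTop_atTop]
      intro b
      obtain ⟨m, hm⟩ := hGex (closedBall 0 b) (isCompact_closedBall 0 b)
      obtain ⟨R, hR⟩ := (isBounded_iff_subset_closedBall 0).mp (hGbdd m).closure
      have hzesc : Tendsto (fun n => ‖f^[n] z‖) atTop atTop := hzI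
      obtain ⟨N, hN⟩ := (tendsto_atTop_atTop.mp hzesc) (R + 1)
      refine ⟨N, fun k hk => ?_⟩
      -- V k avoids closure (G m)
      have hfzk : f^[k] z ∈ (closure (G m))ᶜ := by
        intro hmem
        have := hR hmem
        rw [mem_closedBall, Complex.dist_eq, sub_zero] at this
        have := hN k hk
        linarith
      have hVkm : V k ⊆ (closure (G m))ᶜ := by
        refine preconn_subset_of_frontier_disjoint (hVkconn k) isClosed_closure.isOpen_compl
          ?_ ⟨f^[k] z, hzVk k, hfzk⟩
        ext y
        simp only [Set.mem_inter_iff, Set.mem_empty_iff_false, iff_false, not_and]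
        intro hyVk hyfr
        rw [frontier_compl] at hyfr
        have : y ∈ E := hGfr m (frontier_closure_subset hyfr)
        exact Set.eq_empty_iff_forall_notMem.mp (hVkE k) y ⟨this, hyVk⟩
      -- push x forward
      have hxk : f^[k] x ∈ closure (V k) := by
        have h0 : f^[k] '' V 0 ⊆ V k := by
          have hpc : IsPreconnected (f^[k] '' V 0) :=
            (hVkconn 0).image _ (hcontk k).continuousOn
          have hmem : f^[k] z ∈ f^[k] '' V 0 := ⟨z, hzV₀, rfl⟩
          have hsub : f^[k] '' V 0 ⊆ f^[k] '' W₀ := Set.image_mono  hV₀sub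
          exact hpc.subset_connectedComponentIn hmem hsub
        have h1 : f^[k] x ∈ f^[k] '' closure (V 0) := ⟨x, hxV₀, rfl⟩
        have h2 : f^[k] '' closure (V 0) ⊆ closure (f^[k] '' V 0) :=
          image_closure_subset_closure_image (hcontk k)
        exact closure_mono h0 (h2 h1)
      have : f^[k] x ∉ G m := by
        intro hmem
        have h1 : closure (V k) ⊆ (G m)ᶜ := by
          have h2 : closure (V k) ⊆ closure ((closure (G m))ᶜ) := closure_mono hVkm
          rw [closure_compl] at h2
          refine h2.trans (Set.compl_subset_compl.mpr ?_)
          exact ((hGopen m).subset_interior_iff.mpr subset_closure)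
        exact h1 hxk hmem
      have : f^[k] x ∉ closedBall 0 b := fun hc => this (hm hc)
      rw [mem_closedBall, Complex.dist_eq, sub_zero, not_le] at this
      linarith
    -- conclusion: V 0 is nonempty bounded clopen
    have hfrV₀ : frontier (V 0) = ∅ := by
      ext x
      simp only [Set.mem_empty_iff_false, iff_false]
      intro hxfr
      have hxI : x ∈ I := hV₀I x (frontier_subset_closure hxfr)
      exact hfrVkI 0 x hxfr hxI
    have hclopen : IsClopen (V 0) := isClopen_iff_frontier_eq_empty.mpr hfrV₀
    rcases isClopen_iff.mp hclopen with h | h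
    · rw [h] at hzV₀; exact hzV₀
    · have : Bornology.IsBounded (Set.univ : Set ℂ) := h ▸ hVkbdd 0
      obtain ⟨R, hR⟩ := (isBounded_iff_subset_closedBall 0).mp this
      have hmem := hR (Set.mem_univ ((|R| + 1 : ℝ) : ℂ))
      rw [mem_closedBall, Complex.dist_eq, sub_zero, Complex.norm_real, Real.norm_eq_abs] at hmem
      have habs : |(|R| + 1 : ℝ)| = |R| + 1 := abs_of_nonneg (by positivity)
      rw [habs] at hmem
      have := le_abs_self R
      linarith
  -- assemble: I is preconnected
  have hIpc : IsPreconnected I := by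
    intro u v hu hv hcov ⟨a, haI, hau⟩ ⟨b, hbI, hbv⟩
    by_contra hne
    have hdisj : I ∩ (u ∩ v) = ∅ := Set.not_nonempty_iff_eq_empty.mp hne
    have hEside : E ⊆ u ∨ E ⊆ v := by
      by_cases h1 : (E ∩ u).Nonempty
      · by_cases h2 : (E ∩ v).Nonempty
        · obtain ⟨x, hx⟩ := hEconn u v hu hv (fun y hy => hcov (hE hy)) h1 h2
          exact absurd hdisj (Set.nonempty_iff_ne_empty.mp ⟨x, hE hx.1, hx.2⟩)
        · left
          intro x hx
          rcases hcov (hE hx) with h | h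
          · exact h
          · exact absurd ⟨x, hx, h⟩ h2
      · right
        intro x hx
        rcases hcov (hE hx) with h | h
        · exact absurd ⟨x, hx, h⟩ h1
        · exact h
    rcases hEside with hEu | hEv
    · exact key u v hu hv hcov hdisj hEu b ⟨hbI, hbv⟩
    · exact key v u hv hu (by rwa [Set.union_comm v u]) (by rwa [Set.inter_comm v u])
        hEv a ⟨haI, hau⟩
  have hIne : I.Nonempty := hEne.mono hE
  have hIconn : IsConnected I := ⟨hIne, hIpc⟩
  refine ⟨⟨hIconn, G, fun n => ?_, hGu⟩, hIconn⟩
  obtain ⟨h1, h2, h3, h4, h5, h6⟩ := hG n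
  exact ⟨h1, h2, h3, h4, h5.trans hE, h6⟩
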